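/- A Salomaa system of left-affine language equations has at most one solution: given n×n matrices of languages E_ij ⊆ GS with every string of each E_ij containing at least one action, guards B_ij ⊆ At pairwise disjoint in each row and disjoint from D_i ⊆ At, there is at most one function R : {1,…,n} → 2^GS satisfying R(i) = (⋃_j B_ij ⋄ E_ij ⋄ R(j)) ∪ D_i for all i. -/

import Mathlib

/-- A guarded string over actions `S` and atoms `A`: an initial atom followed by a
list of (action, atom) pairs, representing `α₀p₁α₁⋯pₙαₙ`. -/
abbrev GS (S A : Type*) := A × List (S × A)

variable {S A : Type*}

/-- The last atom of a guarded string. -/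
def lastAtom (x : GS S A) : A := ((x.2.map Prod.snd).getLast?).getD x.1

/-- Fusion product of languages of guarded strings:
`(xα) ⋄ (βy) = xαy` when `α = β`, undefined otherwise. -/
def fprod (L K : Set (GS S A)) : Set (GS S A) :=
  {z | ∃ x ∈ L, ∃ y ∈ K, lastAtom x = y.1 ∧ z = (x.1, x.2 ++ y.2)}

/-- A set of atoms viewed as the language of single-atom guarded strings. -/
def atomsL (B : Set A) : Set (GS S A) := {x | x.1 ∈ B ∧ x.2 = []}

/-- Powers of a language with respect to the fusion product: `L⁰ = At`, `L^{n+1} = Lⁿ ⋄ L`. -/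
def fpow (L : Set (GS S A)) : ℕ → Set (GS S A)
  | 0 => atomsL Set.univ
  | n + 1 => fprod (fpow L n) L

/-- Guarded union: `L +_B K = (B ⋄ L) ∪ (B̄ ⋄ K)`. -/
def gunion (L K : Set (GS S A)) (B : Set A) : Set (GS S A) :=
  fprod (atomsL B) L ∪ fprod (atomsL Bᶜ) K

/-- Guarded iteration: `L^(B) = ⋃_{n≥0} (B ⋄ L)ⁿ ⋄ B̄`. -/
def gloop (L : Set (GS S A)) (B : Set A) : Set (GS S A) :=
  ⋃ n : ℕ, fprod (fpow (fprod (atomsL B) L) n) (atomsL Bᶜ)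

open scoped symmDiff

/-- The minimal number of action symbols in a string of `C` (`∞` if `C = ∅`). -/
noncomputable def gsnorm {S A : Type*} (C : Set (GS S A)) : ℕ∞ :=
  ⨅ x ∈ C, (x.2.length : ℕ∞)

/-- `2^{-m}`, with `2^{-∞} = 0`. -/
noncomputable def pow2neg (m : ℕ∞) : ℝ :=
  if m = ⊤ then 0 else (2 : ℝ) ^ (-((WithTop.untopD 0 m : ℕ) : ℤ))

/-- The metric `d(X,Y) = 2^{-‖X △ Y‖}` on languages of guarded strings. -/
noncomputable def gdist {S A : Type*} (X Y : Set (GS S A)) : ℝ :=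
  pow2neg (gsnorm (X ∆ Y))


lemma mem_fprod_atomsL' {S A : Type*} (Bs : Set A) (L : Set (GS S A)) (z : GS S A) :
    z ∈ fprod (atomsL Bs) L ↔ z.1 ∈ Bs ∧ z ∈ L := by
  constructor
  · rintro ⟨x, ⟨hx1, hx2⟩, y, hy, hl, rfl⟩
    have hl' : x.1 = y.1 := by simpa [lastAtom, hx2] using hl
    simp [hx2, hl']
    exact ⟨hl' ▸ hx1, by simpa [hl'] using hy⟩
  · rintro ⟨h1, h2⟩
    exact ⟨(z.1, []), ⟨h1, rfl⟩, z, h2, by simp [lastAtom], by simp⟩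

theorem salomaa_system_unique_solution {S A : Type*}
    [Fintype S] [Fintype A] [Nonempty S] [Nonempty A] {n : ℕ}
    (E : Fin n → Fin n → Set (GS S A))
    (B : Fin n → Fin n → Set A) (D : Fin n → Set A)
    (hE : ∀ i j, ∀ x ∈ E i j, x.2 ≠ [])
    (hB : ∀ i j k, j ≠ k → B i j ∩ B i k = ∅)
    (hBD : ∀ i j, B i j ∩ D i = ∅)
    (R R' : Fin n → Set (GS S A))
    (hR : ∀ i, R i = (⋃ j, fprod (atomsL (B i j)) (fprod (E i j) (R j))) ∪ atomsL (D i))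
    (hR' : ∀ i, R' i = (⋃ j, fprod (atomsL (B i j)) (fprod (E i j) (R' j))) ∪ atomsL (D i)) :
    R = R' := by
  have key : ∀ m : ℕ, ∀ x : GS S A, x.2.length = m → ∀ i, (x ∈ R i ↔ x ∈ R' i) := by
    intro m
    induction m using Nat.strong_induction_on with
    | _ m ih =>
      intro x hx i
      rw [hR i, hR' i]
      simp only [Set.mem_union, Set.mem_iUnion, mem_fprod_atomsL']
      have step : ∀ (Q Q' : Fin n → Set (GS S A)),
          (∀ (y : GS S A) j, y.2.length < m → (y ∈ Q j ↔ y ∈ Q' j)) →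
          ∀ j, x ∈ fprod (E i j) (Q j) → x ∈ fprod (E i j) (Q' j) := by
        rintro Q Q' hQ j ⟨e, he, y, hy, hl, rfl⟩
        refine ⟨e, he, y, ?_, hl, rfl⟩
        have hlen : y.2.length < m := by
          have := hE i j e he
          cases h2 : e.2 with
          | nil => exact absurd h2 this
          | cons a l => simp [← hx, h2]
        exact (hQ y j hlen).mp hy
      constructor
      · rintro (⟨j, hj1, hj2⟩ | h)
        · exact Or.inl ⟨j, hj1, step R R' (fun y j hy => ih _ hy y rfl j) j hj2⟩
        · exact Or.inr h
      · rintro (⟨j, hj1, hj2⟩ | h)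
        · exact Or.inl ⟨j, hj1, step R' R (fun y j hy => (ih _ hy y rfl j).symm) j hj2⟩
        · exact Or.inr h
  funext i
  ext x
  exact key x.2.length x rfl i
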